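/- Assume there exists at least one pair of indices i, j ∈ {0, …, n} with h_i − h_j > 2L. Then the maximum of (h_i − h_j − 2L)/|t_i − t_j| over all such pairs is attained at a pair (i, j) such that i ∈ {0, n} or i is a lower reflex index, and j ∈ {0, n} or j is an upper reflex index. (Thus the largest slope among overlapping pairs is realized by reflex points, up to the corridor endpoints.) -/
import Mathlib


/-- `PWLinSlope β a b g` : `g` is continuous piecewise-linear on `[a, b]`,
affine with slope `β` or `-β` on each interval of some finite partition of `[a, b]`. -/
def PWLinSlope (β a b : ℝ) (g : ℝ → ℝ) : Prop :=
  ∃ m : ℕ, ∃ s : ℕ → ℝ, s 0 = a ∧ s m = b ∧ (∀ k < m, s k < s (k + 1)) ∧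
    ∀ k < m, ∃ σ : ℝ, (σ = β ∨ σ = -β) ∧
      ∀ x ∈ Set.Icc (s k) (s (k + 1)), g x = g (s k) + σ * (x - s k)

/-- `Feasible a b L f β g` : `g` is a feasible `β`-path over `[a, b]` for the corridor of
half-width `L` around the α-path `f`. -/
def Feasible (a b L : ℝ) (f : ℝ → ℝ) (β : ℝ) (g : ℝ → ℝ) : Prop :=
  PWLinSlope β a b g ∧ ∀ x ∈ Set.Icc a b, |g x - f x| ≤ L

/-- the largest slope among overlapping pairs is attained at a pair whose
first index is an endpoint or a lower reflex index and whose second index is an endpoint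
or an upper reflex index. -/
theorem stmt_6
    (n : ℕ) (hn : 1 ≤ n) (t h : ℕ → ℝ) (α L : ℝ) (f : ℝ → ℝ)
    (hα : 0 < α) (hL : 0 < L)
    (ht : ∀ i < n, t i < t (i + 1))
    (hslope : ∀ i < n,
      h (i + 1) - h i = α * (t (i + 1) - t i) ∨ h (i + 1) - h i = -α * (t (i + 1) - t i))
    (halt : ∀ i, i + 1 < n → (h (i + 2) - h (i + 1)) * (h (i + 1) - h i) < 0)
    (hf : ∀ i < n, ∀ x ∈ Set.Icc (t i) (t (i + 1)),
      f x = h i + (x - t i) * ((h (i + 1) - h i) / (t (i + 1) - t i)))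
    (hex : ∃ i ≤ n, ∃ j ≤ n, h i - h j > 2 * L) :
    ∃ i ≤ n, ∃ j ≤ n, h i - h j > 2 * L ∧
      (i = 0 ∨ i = n ∨ (0 < i ∧ i < n ∧ h (i - 1) < h i ∧ h (i + 1) < h i)) ∧
      (j = 0 ∨ j = n ∨ (0 < j ∧ j < n ∧ h j < h (j - 1) ∧ h j < h (j + 1))) ∧
      ∀ i' ≤ n, ∀ j' ≤ n, h i' - h j' > 2 * L →
        (h i' - h j' - 2 * L) / |t i' - t j'| ≤ (h i - h j - 2 * L) / |t i - t j| := by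
  -- strict monotonicity of t on {0,...,n}
  have tm : ∀ a b : ℕ, a < b → b ≤ n → t a < t b := by
    intro a b
    induction b with
    | zero => intro hab _; omega
    | succ b ih =>
      intro hab hbn
      rcases Nat.lt_succ_iff_lt_or_eq.mp hab with h' | h'
      · exact (ih h' (by omega)).trans (ht b (by omega))
      · subst h'; exact ht a (by omega)
  -- every interior index is a local max or a local min
  have shape : ∀ k, 0 < k → k < n →
      (h (k-1) < h k ∧ h (k+1) < h k) ∨ (h k < h (k-1) ∧ h k < h (k+1)) := by
    intro k hk0 hkn
    have hh := halt (k-1) (by omega)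
    have e1 : k - 1 + 1 = k := by omega
    have e2 : k - 1 + 2 = k + 1 := by omega
    rw [e1, e2] at hh
    rcases mul_neg_iff.mp hh with ⟨h1, h2⟩ | ⟨h1, h2⟩
    · right; constructor <;> linarith
    · left; constructor <;> linarith
  classical
  obtain ⟨i0, hi0, j0, hj0, hgt0⟩ := hex
  set S : Finset (ℕ × ℕ) := (Finset.range (n+1) ×ˢ Finset.range (n+1)).filter
      (fun p => 2 * L < h p.1 - h p.2) with hS
  have hne : S.Nonempty := ⟨(i0, j0), by
    simp [hS, Finset.mem_filter, Finset.mem_product, Nat.lt_succ_iff, hi0, hj0, hgt0]⟩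
  obtain ⟨p, hp, hmax⟩ :=
    S.exists_max_image (fun p => (h p.1 - h p.2 - 2*L)/|t p.1 - t p.2|) hne
  obtain ⟨i, j⟩ := p
  simp only [hS, Finset.mem_filter, Finset.mem_product, Finset.mem_range,
    Nat.lt_succ_iff] at hp
  obtain ⟨⟨hin, hjn⟩, hij⟩ := hp
  have Hmax : ∀ i' ≤ n, ∀ j' ≤ n, h i' - h j' > 2 * L →
      (h i' - h j' - 2*L)/|t i' - t j'| ≤ (h i - h j - 2*L)/|t i - t j| := by
    intro i' hi' j' hj' hgt'
    exact hmax (i', j') (by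
      simp [hS, Finset.mem_filter, Finset.mem_product, Nat.lt_succ_iff, hi', hj', hgt'])
  have hijpos : h j < h i := by linarith
  refine ⟨i, hin, j, hjn, hij, ?_, ?_, Hmax⟩
  · -- i is an endpoint or a lower reflex index
    by_cases hi0' : i = 0
    · exact Or.inl hi0'
    by_cases hin' : i = n
    · exact Or.inr (Or.inl hin')
    have hi1 : 0 < i := by omega
    have hi2 : i < n := by omega
    rcases shape i hi1 hi2 with hmx | hmn
    · exact Or.inr (Or.inr ⟨hi1, hi2, hmx.1, hmx.2⟩)
    exfalso
    -- i is an interior local min: move it toward j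
    have hji : j ≠ i := by rintro rfl; linarith
    have hjm : j ≠ i - 1 := by
      rintro rfl
      have : h (i - 1) < h i := by linarith
      linarith [hmn.1]
    have hjp : j ≠ i + 1 := by
      rintro rfl
      have : h (i + 1) < h i := by linarith
      linarith [hmn.2]
    rcases lt_or_gt_of_ne hji with hlt | hgt
    · -- j < i, in fact j < i - 1 ; use i' = i - 1
      have hj1 : j < i - 1 := by omega
      have t1 : t j < t (i-1) := tm j (i-1) (by omega) (by omega)
      have t2 : t (i-1) < t i := tm (i-1) i (by omega) hin
      have hnum : h i - h j - 2*L < h (i-1) - h j - 2*L := by linarith [hmn.1]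
      have key : (h i - h j - 2*L)/(t i - t j) < (h (i-1) - h j - 2*L)/(t (i-1) - t j) := by
        rw [div_lt_div_iff₀ (by linarith) (by linarith)]
        nlinarith
      have hm := Hmax (i-1) (by omega) j hjn (by linarith [hmn.1])
      rw [abs_of_pos (by linarith : (0:ℝ) < t (i-1) - t j),
        abs_of_pos (by linarith : (0:ℝ) < t i - t j)] at hm
      linarith
    · -- j > i + 1 ; use i' = i + 1
      have hj1 : i + 1 < j := by omega
      have t1 : t (i+1) < t j := tm (i+1) j (by omega) hjn
      have t2 : t i < t (i+1) := tm i (i+1) (by omega) (by omega)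
      have key : (h i - h j - 2*L)/(t j - t i) < (h (i+1) - h j - 2*L)/(t j - t (i+1)) := by
        rw [div_lt_div_iff₀ (by linarith) (by linarith)]
        nlinarith [hmn.2]
      have hm := Hmax (i+1) (by omega) j hjn (by linarith [hmn.2])
      rw [abs_sub_comm, abs_of_pos (by linarith : (0:ℝ) < t j - t (i+1))] at hm
      rw [show |t i - t j| = t j - t i from by
        rw [abs_sub_comm]; exact abs_of_pos (by linarith)] at hm
      linarith
  · -- j is an endpoint or an upper reflex index
    by_cases hj0' : j = 0
    · exact Or.inl hj0'
    by_cases hjn' : j = n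
    · exact Or.inr (Or.inl hjn')
    have hj1 : 0 < j := by omega
    have hj2 : j < n := by omega
    rcases shape j hj1 hj2 with hmx | hmn
    swap
    · exact Or.inr (Or.inr ⟨hj1, hj2, hmn.1, hmn.2⟩)
    exfalso
    -- j is an interior local max: move it toward i
    have hji : i ≠ j := by rintro rfl; linarith
    have him : i ≠ j - 1 := by
      rintro rfl
      have : h (j - 1) < h j := hmx.1
      linarith
    have hip : i ≠ j + 1 := by
      rintro rfl
      have : h (j + 1) < h j := hmx.2
      linarith
    rcases lt_or_gt_of_ne hji with hlt | hgt
    · -- i < j - 1 ; use j' = j - 1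
      have hi1' : i < j - 1 := by omega
      have t1 : t i < t (j-1) := tm i (j-1) (by omega) (by omega)
      have t2 : t (j-1) < t j := tm (j-1) j (by omega) hjn
      have key : (h i - h j - 2*L)/(t j - t i) < (h i - h (j-1) - 2*L)/(t (j-1) - t i) := by
        rw [div_lt_div_iff₀ (by linarith) (by linarith)]
        nlinarith [hmx.1]
      have hm := Hmax i hin (j-1) (by omega) (by linarith [hmx.1])
      rw [abs_sub_comm, abs_of_pos (by linarith : (0:ℝ) < t (j-1) - t i)] at hm
      rw [show |t i - t j| = t j - t i from by
        rw [abs_sub_comm]; exact abs_of_pos (by linarith)] at hm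
      linarith
    · -- i > j + 1 ; use j' = j + 1
      have hi1' : j + 1 < i := by omega
      have t1 : t (j+1) < t i := tm (j+1) i (by omega) hin
      have t2 : t j < t (j+1) := tm j (j+1) (by omega) (by omega)
      have key : (h i - h j - 2*L)/(t i - t j) < (h i - h (j+1) - 2*L)/(t i - t (j+1)) := by
        rw [div_lt_div_iff₀ (by linarith) (by linarith)]
        nlinarith [hmx.2]
      have hm := Hmax i hin (j+1) (by omega) (by linarith [hmx.2])
      rw [abs_of_pos (by linarith : (0:ℝ) < t i - t (j+1)),
        abs_of_pos (by linarith : (0:ℝ) < t i - t j)] at hm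
      linarith
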